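/- (Corollary 2.4) IA-refinement is compositional with respect to IA-conjunction: for Interface Automata P, Q, R with common input and output alphabets and states p, q, r respectively, p ⊑_IA q implies p ∧ r ⊑_IA q ∧ r. -/

import Mathlib

/-- Transition labels: `none` is the silent action τ, `some a` a visible action. -/
abbrev Lbl (A : Type) : Type := Option A

/-- Weak internal transition: a (possibly empty) sequence of τ-steps. -/
def WeakEps {S A : Type} (tr : S → Lbl A → S → Prop) : S → S → Prop :=
  Relation.ReflTransGen (fun p q => tr p none q)

/-- Weak transition: τ-steps followed by one step labelled `α`. -/
def WeakTr {S A : Type} (tr : S → Lbl A → S → Prop) (p : S) (α : Lbl A) (p' : S) : Prop :=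
  ∃ p'', WeakEps tr p p'' ∧ tr p'' α p'

/-- State set of binary compositions: copies of both components plus combined states. -/
inductive CState (S T : Type) : Type
  | left : S → CState S T
  | right : T → CState S T
  | comb : S → T → CState S T

/-- `tr` is the transition relation of an Interface Automaton with inputs `I` and
outputs `O`: disjoint alphabets, labels within `I ∪ O`, and input-determinism. -/
def IsIA {S A : Type} (I O : Set A) (tr : S → Lbl A → S → Prop) : Prop :=
  Disjoint I O ∧
  (∀ s a s', tr s (some a) s' → a ∈ I ∪ O) ∧
  (∀ s a s' s'', a ∈ I → tr s (some a) s' → tr s (some a) s'' → s' = s'')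

/-- Alternating simulation relation between IAs with common alphabets `I`, `O`. -/
def IsAltSim {S T A : Type} (I O : Set A) (trP : S → Lbl A → S → Prop)
    (trQ : T → Lbl A → T → Prop) (R : S → T → Prop) : Prop :=
  ∀ p q, R p q →
    (∀ a q', a ∈ I → trQ q (some a) q' → ∃ p', trP p (some a) p' ∧ R p' q') ∧
    (∀ a p', a ∈ O → trP p (some a) p' → ∃ q', WeakTr trQ q (some a) q' ∧ R p' q') ∧
    (∀ p', trP p none p' → ∃ q', WeakEps trQ q q' ∧ R p' q')

/-- IA-refinement `p ⊑_IA q`. -/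
def IARef {S T A : Type} (I O : Set A) (trP : S → Lbl A → S → Prop)
    (trQ : T → Lbl A → T → Prop) (p : S) (q : T) : Prop :=
  ∃ R, IsAltSim I O trP trQ R ∧ R p q

/-- Transition relation of the IA-conjunction `P ∧ Q` (rules (I1)-(T2)),
on the states `{p ∧ q | p ∈ P, q ∈ Q} ∪ P ∪ Q`. -/
inductive ConjTr {S T A : Type} (I O : Set A) (trP : S → Lbl A → S → Prop)
    (trQ : T → Lbl A → T → Prop) : CState S T → Lbl A → CState S T → Prop
  | fromP {p α p'} : trP p α p' → ConjTr I O trP trQ (CState.left p) α (CState.left p')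
  | fromQ {q α q'} : trQ q α q' → ConjTr I O trP trQ (CState.right q) α (CState.right q')
  | i1 {p q a p'} : a ∈ I → trP p (some a) p' → ¬ (∃ q', trQ q (some a) q') →
      ConjTr I O trP trQ (CState.comb p q) (some a) (CState.left p')
  | i2 {p q a q'} : a ∈ I → ¬ (∃ p', trP p (some a) p') → trQ q (some a) q' →
      ConjTr I O trP trQ (CState.comb p q) (some a) (CState.right q')
  | i3 {p q a p' q'} : a ∈ I → trP p (some a) p' → trQ q (some a) q' →
      ConjTr I O trP trQ (CState.comb p q) (some a) (CState.comb p' q')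
  | out {p q a p' q'} : a ∈ O → trP p (some a) p' → trQ q (some a) q' →
      ConjTr I O trP trQ (CState.comb p q) (some a) (CState.comb p' q')
  | t1 {p q p'} : trP p none p' → ConjTr I O trP trQ (CState.comb p q) none (CState.comb p' q)
  | t2 {p q q'} : trQ q none q' → ConjTr I O trP trQ (CState.comb p q) none (CState.comb p q')

/-- The candidate simulation relation for compositionality. -/
inductive CRel {S T U : Type} (R : S → T → Prop) : CState S U → CState T U → Prop
  | comb {p q r} : R p q → CRel R (CState.comb p r) (CState.comb q r)
  | left {p q} : R p q → CRel R (CState.left p) (CState.left q)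
  | rr {r} : CRel R (CState.right r) (CState.right r)
  | cr {p r} : CRel R (CState.comb p r) (CState.right r)

lemma weakEps_left {T U A : Type} {I O : Set A} {trQ : T → Lbl A → T → Prop}
    {trR : U → Lbl A → U → Prop} {q q' : T} (h : WeakEps trQ q q') :
    WeakEps (ConjTr I O trQ trR) (CState.left q) (CState.left q') :=
  Relation.ReflTransGen.lift (r := fun a b => trQ a none b)
    (p := fun x y => ConjTr I O trQ trR x none y) (fun q => CState.left q) (fun _ _ h => ConjTr.fromP h) _ _ h

lemma weakEps_comb {T U A : Type} {I O : Set A} {trQ : T → Lbl A → T → Prop}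
    {trR : U → Lbl A → U → Prop} {q q' : T} (r : U) (h : WeakEps trQ q q') :
    WeakEps (ConjTr I O trQ trR) (CState.comb q r) (CState.comb q' r) :=
  Relation.ReflTransGen.lift (r := fun a b => trQ a none b)
    (p := fun x y => ConjTr I O trQ trR x none y) (fun q => CState.comb q r) (fun _ _ h => ConjTr.t1 h) _ _ h

/-- Corollary 2.4: IA-refinement is compositional w.r.t. IA-conjunction. -/
theorem ia_conj_compositional {A S T U : Type} (I O : Set A)
    (trP : S → Lbl A → S → Prop) (trQ : T → Lbl A → T → Prop)
    (trR : U → Lbl A → U → Prop)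
    (hP : IsIA I O trP) (hQ : IsIA I O trQ) (hR : IsIA I O trR)
    (p : S) (q : T) (r : U)
    (h : IARef I O trP trQ p q) :
    IARef I O (ConjTr I O trP trR) (ConjTr I O trQ trR)
      (CState.comb p r) (CState.comb q r) := by
  obtain ⟨R, hsim, hpq⟩ := h
  refine ⟨CRel R, ?_, CRel.comb hpq⟩
  intro x y hxy
  induction hxy with
  | @comb p q r hpq =>
    obtain ⟨hin, hout, htau⟩ := hsim p q hpq
    refine ⟨?_, ?_, ?_⟩
    · intro a y' ha hy
      cases hy with
      | i1 ha' hq hnr =>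
        obtain ⟨p', hp', hR⟩ := hin a _ ha' hq
        exact ⟨_, ConjTr.i1 ha' hp' hnr, CRel.left hR⟩
      | i2 ha' hnq hr =>
        by_cases hp : ∃ p', trP p (some a) p'
        · obtain ⟨p', hp'⟩ := hp
          exact ⟨_, ConjTr.i3 ha' hp' hr, CRel.cr⟩
        · exact ⟨_, ConjTr.i2 ha' hp hr, CRel.rr⟩
      | i3 ha' hq hr =>
        obtain ⟨p', hp', hR⟩ := hin a _ ha' hq
        exact ⟨_, ConjTr.i3 ha' hp' hr, CRel.comb hR⟩
      | out haO hq hr => exact absurd haO (Set.disjoint_left.mp hP.1 ha)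
    · intro a x' ha hx
      cases hx with
      | i1 ha' _ _ => exact absurd ha (Set.disjoint_left.mp hP.1 ha')
      | i2 ha' _ _ => exact absurd ha (Set.disjoint_left.mp hP.1 ha')
      | i3 ha' _ _ => exact absurd ha (Set.disjoint_left.mp hP.1 ha')
      | out haO hp hr =>
        obtain ⟨q', ⟨q'', heps, hstep⟩, hR⟩ := hout a _ ha hp
        exact ⟨_, ⟨_, weakEps_comb r heps, ConjTr.out ha hstep hr⟩, CRel.comb hR⟩
    · intro x' hx
      cases hx with
      | t1 hp =>
        obtain ⟨q', heps, hR⟩ := htau _ hp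
        exact ⟨_, weakEps_comb r heps, CRel.comb hR⟩
      | t2 hr =>
        exact ⟨_, Relation.ReflTransGen.single (ConjTr.t2 hr), CRel.comb hpq⟩
  | @left p q hpq =>
    obtain ⟨hin, hout, htau⟩ := hsim p q hpq
    refine ⟨?_, ?_, ?_⟩
    · intro a y' ha hy
      cases hy with
      | fromP hq =>
        obtain ⟨p', hp', hR⟩ := hin a _ ha hq
        exact ⟨_, ConjTr.fromP hp', CRel.left hR⟩
    · intro a x' ha hx
      cases hx with
      | fromP hp =>
        obtain ⟨q', ⟨q'', heps, hstep⟩, hR⟩ := hout a _ ha hp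
        exact ⟨_, ⟨_, weakEps_left heps, ConjTr.fromP hstep⟩, CRel.left hR⟩
    · intro x' hx
      cases hx with
      | fromP hp =>
        obtain ⟨q', heps, hR⟩ := htau _ hp
        exact ⟨_, weakEps_left heps, CRel.left hR⟩
  | @rr r =>
    refine ⟨?_, ?_, ?_⟩
    · intro a y' ha hy
      cases hy with
      | fromQ hr => exact ⟨_, ConjTr.fromQ hr, CRel.rr⟩
    · intro a x' ha hx
      cases hx with
      | fromQ hr =>
        exact ⟨_, ⟨_, Relation.ReflTransGen.refl, ConjTr.fromQ hr⟩, CRel.rr⟩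
    · intro x' hx
      cases hx with
      | fromQ hr =>
        exact ⟨_, Relation.ReflTransGen.single (ConjTr.fromQ hr), CRel.rr⟩
  | @cr p r =>
    refine ⟨?_, ?_, ?_⟩
    · intro a y' ha hy
      cases hy with
      | fromQ hr =>
        by_cases hp : ∃ p', trP p (some a) p'
        · obtain ⟨p', hp'⟩ := hp
          exact ⟨_, ConjTr.i3 ha hp' hr, CRel.cr⟩
        · exact ⟨_, ConjTr.i2 ha hp hr, CRel.rr⟩
    · intro a x' ha hx
      cases hx with
      | i1 ha' _ _ => exact absurd ha (Set.disjoint_left.mp hP.1 ha')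
      | i2 ha' _ _ => exact absurd ha (Set.disjoint_left.mp hP.1 ha')
      | i3 ha' _ _ => exact absurd ha (Set.disjoint_left.mp hP.1 ha')
      | out haO hp hr =>
        exact ⟨_, ⟨_, Relation.ReflTransGen.refl, ConjTr.fromQ hr⟩, CRel.cr⟩
    · intro x' hx
      cases hx with
      | t1 hp => exact ⟨_, Relation.ReflTransGen.refl, CRel.cr⟩
      | t2 hr =>
        exact ⟨_, Relation.ReflTransGen.single (ConjTr.fromQ hr), CRel.cr⟩
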